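/- Let M be a matroid on a finite ground set U, let N ⊆ U with rank(N) ≥ 1, let b > 0 and c > 0 be reals, and let x : U → [0,1] satisfy Σ_{e∈S} x(e) ≤ b · rank(S) for every S ⊆ U (that is, x ∈ b · P_M). Let μ be a probability measure on the powerset of U such that μ{ R ⊆ U : e ∈ R } = x(e) for every e ∈ N. For T ⊆ N and e ∈ U define P(T, e) = μ{ R ⊆ U : e ∈ span(((R ∩ N) ∪ T) \ {e}) }. Suppose S ⊆ N satisfies P(S, e) ≤ c for every e ∈ N \ S, and moreover S ⊆ T for every T ⊆ N satisfying P(T, e) ≤ c for every e ∈ N \ T (that is, S is the minimum such set). Then rank(S) < (b / c) · rank(N). -/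
import Mathlib


open Classical

/-- A matroid on a finite ground set `α`, given by its independent sets. -/
structure FinMatroid (α : Type*) [DecidableEq α] [Fintype α] where
  /-- The independent sets. -/
  Indep : Finset α → Prop
  indep_empty : Indep ∅
  indep_subset : ∀ ⦃I J : Finset α⦄, Indep J → I ⊆ J → Indep I
  indep_exchange : ∀ ⦃I J : Finset α⦄, Indep I → Indep J → I.card < J.card →
    ∃ e ∈ J, e ∉ I ∧ Indep (insert e I)

namespace FinMatroid

variable {α : Type*} [DecidableEq α] [Fintype α]

/-- A basis of the matroid: a maximal independent set. -/
def Base (M : FinMatroid α) (B : Finset α) : Prop :=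
  M.Indep B ∧ ∀ e : α, e ∉ B → ¬ M.Indep (insert e B)

/-- The rank of a set: the size of a largest independent subset. -/
noncomputable def rank (M : FinMatroid α) (S : Finset α) : ℕ :=
  (S.powerset.filter M.Indep).sup Finset.card

/-- The span of a set: the elements whose insertion does not increase the rank. -/
noncomputable def span (M : FinMatroid α) (S : Finset α) : Finset α :=
  Finset.univ.filter fun e => M.rank (insert e S) = M.rank S

variable {M : FinMatroid α} {I J A B S T : Finset α} {e : α}

lemma card_le_rank (h : M.Indep I) (hIS : I ⊆ S) : I.card ≤ M.rank S :=
  Finset.le_sup (by simp [Finset.mem_filter, Finset.mem_powerset, hIS, h])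

lemma exists_indep_rank (M : FinMatroid α) (S : Finset α) :
    ∃ I, I ⊆ S ∧ M.Indep I ∧ I.card = M.rank S := by
  have hne : (S.powerset.filter M.Indep).Nonempty :=
    ⟨∅, by simp [Finset.mem_filter, M.indep_empty]⟩
  obtain ⟨I, hI, hsup⟩ := Finset.exists_mem_eq_sup _ hne Finset.card
  simp only [Finset.mem_filter, Finset.mem_powerset] at hI
  exact ⟨I, hI.1, hI.2, hsup.symm⟩

lemma rank_mono (h : A ⊆ B) : M.rank A ≤ M.rank B := by
  apply Finset.sup_le
  intro I hI
  simp only [Finset.mem_filter, Finset.mem_powerset] at hI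
  exact card_le_rank hI.2 (hI.1.trans h)

lemma rank_le_card (M : FinMatroid α) (S : Finset α) : M.rank S ≤ S.card := by
  apply Finset.sup_le
  intro I hI
  simp only [Finset.mem_filter, Finset.mem_powerset] at hI
  exact Finset.card_le_card hI.1

lemma rank_empty (M : FinMatroid α) : M.rank ∅ = 0 :=
  Nat.le_antisymm (by simpa using M.rank_le_card ∅) (Nat.zero_le _)

lemma rank_insert_le (M : FinMatroid α) (S : Finset α) (e : α) :
    M.rank (insert e S) ≤ M.rank S + 1 := by
  apply Finset.sup_le
  intro I hI
  simp only [Finset.mem_filter, Finset.mem_powerset] at hI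
  have hIe : I.erase e ⊆ S := by
    intro a ha
    rcases Finset.mem_erase.mp ha with ⟨hne, haI⟩
    rcases Finset.mem_insert.mp (hI.1 haI) with h | h
    · exact absurd h hne
    · exact h
  have h1 : (I.erase e).card ≤ M.rank S :=
    card_le_rank (M.indep_subset hI.2 (Finset.erase_subset _ _)) hIe
  by_cases he : e ∈ I
  · rw [← Finset.card_erase_add_one he]; omega
  · rw [Finset.erase_eq_of_notMem he] at h1; omega

lemma indep_extend (hI : M.Indep I) (hIS : I ⊆ S) :
    ∃ J, I ⊆ J ∧ J ⊆ S ∧ M.Indep J ∧ J.card = M.rank S := by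
  obtain ⟨n, hn⟩ : ∃ n, M.rank S - I.card ≤ n := ⟨_, le_rfl⟩
  induction n generalizing I with
  | zero =>
      have := card_le_rank hI hIS
      exact ⟨I, le_rfl, hIS, hI, by omega⟩
  | succ n ih =>
      by_cases hc : I.card = M.rank S
      · exact ⟨I, le_rfl, hIS, hI, hc⟩
      · have hlt : I.card < M.rank S := lt_of_le_of_ne (card_le_rank hI hIS) hc
        obtain ⟨B, hBS, hBind, hBcard⟩ := exists_indep_rank M S
        obtain ⟨f, hfB, hfI, hfind⟩ := M.indep_exchange hI hBind (by omega)
        obtain ⟨J, hJ1, hJ2, hJ3, hJ4⟩ := ih hfind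
          (Finset.insert_subset (hBS hfB) hIS)
          (by rw [Finset.card_insert_of_notMem hfI]; omega)
        exact ⟨J, (Finset.subset_insert _ _).trans hJ1, hJ2, hJ3, hJ4⟩

/-- Key: span is monotone, expressed via ranks. -/
lemma rank_insert_eq_of_subset (hAB : A ⊆ B) (h : M.rank (insert e A) = M.rank A) :
    M.rank (insert e B) = M.rank B := by
  refine Nat.le_antisymm ?_ (rank_mono (Finset.subset_insert _ _))
  by_contra hlt
  push_neg at hlt
  obtain ⟨IA, hIAA, hIAind, hIAcard⟩ := exists_indep_rank M A
  obtain ⟨IB, hIAB, hIBB, hIBind, hIBcard⟩ := indep_extend hIAind (hIAA.trans hAB)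
  obtain ⟨J, hJsub, hJind, hJcard⟩ := exists_indep_rank M (insert e B)
  obtain ⟨f, hfJ, hfIB, hfind⟩ := M.indep_exchange hIBind hJind (by omega)
  rcases Finset.mem_insert.mp (hJsub hfJ) with hfe | hfB
  · subst hfe
    have heIA : f ∉ IA := fun h' => hfIB (hIAB h')
    have h1 : (insert f IA).card ≤ M.rank (insert f A) :=
      card_le_rank (M.indep_subset hfind (Finset.insert_subset_insert _ hIAB))
        (Finset.insert_subset_insert _ hIAA)
    rw [Finset.card_insert_of_notMem heIA, hIAcard, h] at h1
    omega
  · have h1 : (insert f IB).card ≤ M.rank B :=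
      card_le_rank hfind (Finset.insert_subset hfB hIBB)
    rw [Finset.card_insert_of_notMem hfIB, hIBcard] at h1
    omega

lemma mem_span_iff : e ∈ M.span S ↔ M.rank (insert e S) = M.rank S := by
  simp [span]

lemma span_mono (hAB : A ⊆ B) : M.span A ⊆ M.span B := by
  intro e he
  rw [mem_span_iff] at he ⊢
  exact rank_insert_eq_of_subset hAB he

lemma rank_insert_of_mem_span_erase (h : e ∈ M.span (S.erase e)) :
    M.rank (insert e S) = M.rank S :=
  rank_insert_eq_of_subset (Finset.erase_subset _ _) (mem_span_iff.mp h)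

end FinMatroid

section Prob
variable {α : Type*} [DecidableEq α] [Fintype α]

noncomputable def Pp (M : FinMatroid α) (N : Finset α) (μ : Finset α → ℝ) (T : Finset α)
    (e : α) : ℝ :=
  ∑ R : Finset α, if e ∈ M.span (((R ∩ N) ∪ T).erase e) then μ R else 0

noncomputable def Gfun (M : FinMatroid α) (N : Finset α) (μ : Finset α → ℝ)
    (T : Finset α) : ℝ :=
  ∑ R : Finset α, μ R * (M.rank ((R ∩ N) ∪ T) : ℝ)

noncomputable def Phi (M : FinMatroid α) (N : Finset α) (μ : Finset α → ℝ) (c : ℝ)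
    (T : Finset α) : ℝ :=
  Gfun M N μ T - (1 - c) * (M.rank T : ℝ)

variable {M : FinMatroid α} {N T T' S : Finset α} {μ : Finset α → ℝ} {b c : ℝ} {e : α}

lemma Pp_mono (hμ0 : ∀ R, 0 ≤ μ R) (h : T ⊆ T') : Pp M N μ T e ≤ Pp M N μ T' e := by
  apply Finset.sum_le_sum
  intro R _
  have hsub : (((R ∩ N) ∪ T).erase e) ⊆ (((R ∩ N) ∪ T').erase e) :=
    Finset.erase_subset_erase _ (Finset.union_subset_union_right h)
  split_ifs with h1 h2
  · exact le_rfl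
  · exact absurd (FinMatroid.span_mono hsub h1) h2
  · exact hμ0 R
  · exact le_rfl

lemma step_lemma (hμ0 : ∀ R, 0 ≤ μ R) (hμ1 : ∑ R : Finset α, μ R = 1)
    (hT' : T' ⊆ T) (he : c < Pp M N μ T' e) :
    Phi M N μ c (insert e T) ≤ Phi M N μ c T ∧
      (M.rank T < M.rank (insert e T) → Phi M N μ c (insert e T) < Phi M N μ c T) := by
  by_cases hr : M.rank (insert e T) = M.rank T
  · have hG : Gfun M N μ (insert e T) = Gfun M N μ T := by
      unfold Gfun
      apply Finset.sum_congr rfl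
      intro R _
      have : (R ∩ N) ∪ insert e T = insert e ((R ∩ N) ∪ T) := Finset.union_insert _ _ _
      rw [this, FinMatroid.rank_insert_eq_of_subset Finset.subset_union_right hr]
    constructor
    · unfold Phi; rw [hG, hr]
    · intro h; omega
  · have hr1 : M.rank (insert e T) = M.rank T + 1 := by
      have h1 := M.rank_insert_le T e
      have h2 : M.rank T ≤ M.rank (insert e T) :=
        FinMatroid.rank_mono (Finset.subset_insert _ _)
      omega
    have hG : Gfun M N μ (insert e T) ≤ Gfun M N μ T + (1 - Pp M N μ T' e) := by
      have hpt : ∀ R : Finset α,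
          μ R * (M.rank ((R ∩ N) ∪ insert e T) : ℝ) ≤
            μ R * (M.rank ((R ∩ N) ∪ T) : ℝ) +
              (μ R - (if e ∈ M.span (((R ∩ N) ∪ T').erase e) then μ R else 0)) := by
        intro R
        have hins : (R ∩ N) ∪ insert e T = insert e ((R ∩ N) ∪ T) :=
          Finset.union_insert _ _ _
        by_cases hsp : e ∈ M.span (((R ∩ N) ∪ T').erase e)
        · have hsub : (((R ∩ N) ∪ T').erase e) ⊆ ((((R ∩ N) ∪ T)).erase e) :=
            Finset.erase_subset_erase _ (Finset.union_subset_union_right hT')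
          have : M.rank (insert e ((R ∩ N) ∪ T)) = M.rank ((R ∩ N) ∪ T) :=
            FinMatroid.rank_insert_of_mem_span_erase (FinMatroid.span_mono hsub hsp)
          rw [hins, this, if_pos hsp]
          linarith
        · rw [if_neg hsp, hins]
          have h1 : M.rank (insert e ((R ∩ N) ∪ T)) ≤ M.rank ((R ∩ N) ∪ T) + 1 :=
            M.rank_insert_le _ e
          have h1' : (M.rank (insert e ((R ∩ N) ∪ T)) : ℝ) ≤
              (M.rank ((R ∩ N) ∪ T) : ℝ) + 1 := by exact_mod_cast h1
          have := hμ0 R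
          nlinarith
      calc Gfun M N μ (insert e T)
          ≤ ∑ R : Finset α, (μ R * (M.rank ((R ∩ N) ∪ T) : ℝ) +
              (μ R - (if e ∈ M.span (((R ∩ N) ∪ T').erase e) then μ R else 0))) :=
            Finset.sum_le_sum fun R _ => hpt R
        _ = Gfun M N μ T + (1 - Pp M N μ T' e) := by
            rw [Finset.sum_add_distrib, Finset.sum_sub_distrib, hμ1]
            unfold Gfun Pp
            ring
    have hkey : Phi M N μ c (insert e T) < Phi M N μ c T := by
      unfold Phi
      rw [hr1]
      push_cast
      nlinarith [hG]
    exact ⟨le_of_lt hkey, fun _ => hkey⟩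

lemma steps_lemma (hμ0 : ∀ R, 0 ≤ μ R) (hμ1 : ∑ R : Finset α, μ R = 1)
    (hT' : T' ⊆ T) (D : Finset α) (hD : ∀ e ∈ D, c < Pp M N μ T' e) :
    Phi M N μ c (T ∪ D) ≤ Phi M N μ c T ∧
      (M.rank T < M.rank (T ∪ D) → Phi M N μ c (T ∪ D) < Phi M N μ c T) := by
  induction D using Finset.induction_on with
  | empty => simp
  | @insert f D' hf ih =>
      have ihD : ∀ e ∈ D', c < Pp M N μ T' e := fun e heD => hD e (Finset.mem_insert_of_mem heD)
      obtain ⟨ih1, ih2⟩ := ih ihD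
      have hins : T ∪ insert f D' = insert f (T ∪ D') := by
        rw [Finset.union_insert]
      obtain ⟨s1, s2⟩ := step_lemma (T := T ∪ D') hμ0 hμ1
        (hT'.trans Finset.subset_union_left) (hD f (Finset.mem_insert_self _ _))
      rw [hins]
      constructor
      · exact le_trans s1 ih1
      · intro hrk
        by_cases hr2 : M.rank T < M.rank (T ∪ D')
        · exact lt_of_le_of_lt s1 (ih2 hr2)
        · have heq : M.rank T = M.rank (T ∪ D') :=
            Nat.le_antisymm (FinMatroid.rank_mono Finset.subset_union_left) (Nat.le_of_not_lt hr2)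
          have hrk' : M.rank T < M.rank (insert f (T ∪ D')) := hrk
          have hlt : M.rank (T ∪ D') < M.rank (insert f (T ∪ D')) := by omega
          exact lt_of_lt_of_le (s2 hlt) ih1

noncomputable def chain (M : FinMatroid α) (N : Finset α) (μ : Finset α → ℝ) (c : ℝ) :
    ℕ → Finset α
  | 0 => ∅
  | i + 1 => chain M N μ c i ∪
      (N \ chain M N μ c i).filter (fun e => c < Pp M N μ (chain M N μ c i) e)

end Prob

section Chain
variable {α : Type*} [DecidableEq α] [Fintype α]
variable {M : FinMatroid α} {N S : Finset α} {μ : Finset α → ℝ} {c : ℝ}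

lemma chain_subset_N : ∀ i, chain M N μ c i ⊆ N := by
  intro i
  induction i with
  | zero => simp [chain]
  | succ i ih =>
      refine Finset.union_subset ih ?_
      exact (Finset.filter_subset _ _).trans (Finset.sdiff_subset)

lemma phi_chain (hμ0 : ∀ R, 0 ≤ μ R) (hμ1 : ∑ R : Finset α, μ R = 1) :
    ∀ i, Phi M N μ c (chain M N μ c i) ≤ Phi M N μ c ∅ ∧
      (0 < M.rank (chain M N μ c i) →
        Phi M N μ c (chain M N μ c i) < Phi M N μ c ∅) := by
  intro i
  induction i with
  | zero =>
      refine ⟨le_rfl, fun h => ?_⟩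
      rw [show chain M N μ c 0 = ∅ from rfl, M.rank_empty] at h
      omega
  | succ i ih =>
      obtain ⟨ih1, ih2⟩ := ih
      have hD : ∀ e ∈ (N \ chain M N μ c i).filter
          (fun e => c < Pp M N μ (chain M N μ c i) e),
          c < Pp M N μ (chain M N μ c i) e := by
        intro e he
        exact (Finset.mem_filter.mp he).2
      obtain ⟨s1, s2⟩ := steps_lemma hμ0 hμ1 (le_refl (chain M N μ c i)) _ hD
      have hch : chain M N μ c (i+1) = chain M N μ c i ∪
          (N \ chain M N μ c i).filter (fun e => c < Pp M N μ (chain M N μ c i) e) := rfl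
      rw [hch]
      constructor
      · exact le_trans s1 ih1
      · intro hrk
        by_cases h0 : 0 < M.rank (chain M N μ c i)
        · exact lt_of_le_of_lt s1 (ih2 h0)
        · have hlt : M.rank (chain M N μ c i) < M.rank (chain M N μ c i ∪
              (N \ chain M N μ c i).filter (fun e => c < Pp M N μ (chain M N μ c i) e)) := by
            omega
          exact lt_of_lt_of_le (s2 hlt) ih1

lemma exists_stable : ∃ j, chain M N μ c j = chain M N μ c (j+1) := by
  by_contra h
  push_neg at h
  have hcard : ∀ j, j ≤ (chain M N μ c j).card := by
    intro j
    induction j with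
    | zero => omega
    | succ j ih =>
        have hss : chain M N μ c j ⊂ chain M N μ c (j+1) :=
          Finset.ssubset_iff_subset_ne.mpr ⟨Finset.subset_union_left, h j⟩
        have := Finset.card_lt_card hss
        omega
  have h1 := hcard (N.card + 1)
  have h2 := Finset.card_le_card (chain_subset_N (M := M) (N := N) (μ := μ) (c := c) (N.card + 1))
  omega

end Chain

/-- Lemma (FSZ16, Section 2.1.1): if `x ∈ b·P_M`, `μ` has marginals `x` on `N`, and `S` is
the minimum subset of `N` with `P(S, e) ≤ c` for all `e ∈ N \ S`, then
`rank S < (b / c) · rank N`. -/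
theorem stmt_6 {α : Type*} [DecidableEq α] [Fintype α] (M : FinMatroid α)
    (N : Finset α) (hN : 1 ≤ M.rank N)
    (b c : ℝ) (hb : 0 < b) (hc : 0 < c)
    (x : α → ℝ) (hx0 : ∀ e : α, 0 ≤ x e) (hx1 : ∀ e : α, x e ≤ 1)
    (hxP : ∀ S : Finset α, ∑ e ∈ S, x e ≤ b * (M.rank S : ℝ))
    (μ : Finset α → ℝ) (hμ0 : ∀ R : Finset α, 0 ≤ μ R) (hμ1 : ∑ R : Finset α, μ R = 1)
    (hmarg : ∀ e ∈ N, (∑ R : Finset α, if e ∈ R then μ R else 0) = x e)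
    (S : Finset α) (hSN : S ⊆ N)
    (hS : ∀ e ∈ N \ S,
      (∑ R : Finset α, if e ∈ M.span (((R ∩ N) ∪ S).erase e) then μ R else 0) ≤ c)
    (hSmin : ∀ T : Finset α, T ⊆ N →
      (∀ e ∈ N \ T,
        (∑ R : Finset α, if e ∈ M.span (((R ∩ N) ∪ T).erase e) then μ R else 0) ≤ c) →
      S ⊆ T) :
    (M.rank S : ℝ) < (b / c) * (M.rank N : ℝ) := by
  have hS' : ∀ e ∈ N \ S, Pp M N μ S e ≤ c := hS
  -- the chain is contained in S
  have hchainS : ∀ i, chain M N μ c i ⊆ S := by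
    intro i
    induction i with
    | zero => exact Finset.empty_subset _
    | succ i ih =>
        refine Finset.union_subset ih ?_
        intro e he
        rw [Finset.mem_filter] at he
        obtain ⟨heN, hgt⟩ := he
        by_contra heS
        have h1 : Pp M N μ S e ≤ c :=
          hS' e (Finset.mem_sdiff.mpr ⟨(Finset.mem_sdiff.mp heN).1, heS⟩)
        have h2 : Pp M N μ (chain M N μ c i) e ≤ Pp M N μ S e := Pp_mono hμ0 ih
        linarith
  obtain ⟨j, hstab⟩ := exists_stable (M := M) (N := N) (μ := μ) (c := c)
  have hstable : ∀ e ∈ N \ chain M N μ c j, Pp M N μ (chain M N μ c j) e ≤ c := by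
    intro e he
    by_contra hgt
    push_neg at hgt
    have hmem : e ∈ chain M N μ c (j+1) :=
      Finset.mem_union_right _ (Finset.mem_filter.mpr ⟨he, hgt⟩)
    rw [← hstab] at hmem
    exact (Finset.mem_sdiff.mp he).2 hmem
  have hSeq : S = chain M N μ c j :=
    Finset.Subset.antisymm (hSmin _ (chain_subset_N j) hstable) (hchainS j)
  -- potential inequality
  have hPhi := phi_chain (M := M) (N := N) (c := c) hμ0 hμ1 j
  rw [← hSeq] at hPhi
  -- G(S) ≥ rank S
  have hGS : (M.rank S : ℝ) ≤ Gfun M N μ S := by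
    have h1 : (M.rank S : ℝ) = ∑ R : Finset α, μ R * (M.rank S : ℝ) := by
      rw [← Finset.sum_mul, hμ1, one_mul]
    rw [h1]
    apply Finset.sum_le_sum
    intro R _
    have : M.rank S ≤ M.rank ((R ∩ N) ∪ S) := FinMatroid.rank_mono Finset.subset_union_right
    have h2 : (M.rank S : ℝ) ≤ (M.rank ((R ∩ N) ∪ S) : ℝ) := by exact_mod_cast this
    exact mul_le_mul_of_nonneg_left h2 (hμ0 R)
  -- G(∅) ≤ b rank N
  have hGe : Gfun M N μ ∅ ≤ b * (M.rank N : ℝ) := by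
    have h1 : Gfun M N μ ∅ ≤ ∑ R : Finset α, μ R * (((R ∩ N)).card : ℝ) := by
      apply Finset.sum_le_sum
      intro R _
      rw [Finset.union_empty]
      have h := M.rank_le_card (R ∩ N)
      have h' : (M.rank (R ∩ N) : ℝ) ≤ ((R ∩ N).card : ℝ) := by exact_mod_cast h
      exact mul_le_mul_of_nonneg_left h' (hμ0 R)
    have h2 : ∀ R : Finset α, μ R * (((R ∩ N)).card : ℝ) =
        ∑ e ∈ N, (if e ∈ R then μ R else 0) := by
      intro R
      have hcard : ((R ∩ N).card : ℝ) = ∑ e ∈ N, (if e ∈ R then (1 : ℝ) else 0) := by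
        rw [Finset.inter_comm, ← Finset.filter_mem_eq_inter]
        rw [Finset.card_filter]
        push_cast
        rfl
      rw [hcard, Finset.mul_sum]
      apply Finset.sum_congr rfl
      intro e _
      split_ifs <;> ring
    have h3 : ∑ R : Finset α, μ R * (((R ∩ N)).card : ℝ) = ∑ e ∈ N, x e := by
      rw [Finset.sum_congr rfl (fun R _ => h2 R), Finset.sum_comm]
      exact Finset.sum_congr rfl (fun e he => hmarg e he)
    calc Gfun M N μ ∅ ≤ ∑ R : Finset α, μ R * (((R ∩ N)).card : ℝ) := h1
      _ = ∑ e ∈ N, x e := h3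
      _ ≤ b * (M.rank N : ℝ) := hxP N
  have hPhiE : Phi M N μ c ∅ = Gfun M N μ ∅ := by
    unfold Phi
    rw [M.rank_empty]
    push_cast
    ring
  by_cases h0 : M.rank S = 0
  · rw [h0]
    push_cast
    have h1 : (0 : ℝ) < (M.rank N : ℝ) := by exact_mod_cast hN
    positivity
  · have h0' : 0 < M.rank S := Nat.pos_of_ne_zero h0
    have hstrict := hPhi.2 h0'
    rw [hPhiE] at hstrict
    unfold Phi at hstrict
    have hkey : c * (M.rank S : ℝ) < b * (M.rank N : ℝ) := by linarith
    rw [div_mul_eq_mul_div, lt_div_iff₀ hc]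
    nlinarith
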